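/- Let R = ℂ[[h]] be the ring of formal power series over ℂ, M = R² the free R-module with basis e₁,e₂, and λ_h, λ'_h ∈ R. Let ·ₕ and ·ₕ' be the R-bilinear operations A_h^{λ_h,0} and A_h^{λ'_h,0} on M (so e₁·ₕe₁ = λ_h e₁, e₁·ₕe₂ = (λ_h+h)e₂, e₂·ₕe₁ = λ_h e₂, e₂·ₕe₂ = 0, and similarly for ·ₕ' with λ'_h). Then A_h^{λ_h,0} and A_h^{λ'_h,0} are equivalent — i.e. there exists an R-linear automorphism f of M with f(x) − x ∈ hM for all x ∈ M and f(x·ₕy) = f(x)·ₕ'f(y) for all x,y ∈ M — if and only if λ_h = λ'_h. -/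

import Mathlib

/-- Two Novikov products A_h^{λ_h,0} and A_h^{λ'_h,0} on M = ℂ[[h]]² are
equivalent (via an R-linear automorphism f with f ≡ id mod h intertwining the products)
if and only if λ_h = λ'_h. -/
theorem stmt_19 (lam lam' : PowerSeries ℂ)
    (mul mul' : (Fin 2 → PowerSeries ℂ) →ₗ[PowerSeries ℂ]
        (Fin 2 → PowerSeries ℂ) →ₗ[PowerSeries ℂ] (Fin 2 → PowerSeries ℂ))
    (e₁ e₂ : Fin 2 → PowerSeries ℂ) (he₁ : e₁ = ![1, 0]) (he₂ : e₂ = ![0, 1])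
    (h11 : mul e₁ e₁ = lam • e₁)
    (h12 : mul e₁ e₂ = (lam + PowerSeries.X) • e₂)
    (h21 : mul e₂ e₁ = lam • e₂)
    (h22 : mul e₂ e₂ = 0)
    (h11' : mul' e₁ e₁ = lam' • e₁)
    (h12' : mul' e₁ e₂ = (lam' + PowerSeries.X) • e₂)
    (h21' : mul' e₂ e₁ = lam' • e₂)
    (h22' : mul' e₂ e₂ = 0) :
    (∃ f : (Fin 2 → PowerSeries ℂ) ≃ₗ[PowerSeries ℂ] (Fin 2 → PowerSeries ℂ),
        (∀ x : Fin 2 → PowerSeries ℂ,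
          ∃ m : Fin 2 → PowerSeries ℂ, f x - x = (PowerSeries.X : PowerSeries ℂ) • m) ∧
        (∀ x y : Fin 2 → PowerSeries ℂ, f (mul x y) = mul' (f x) (f y))) ↔
    lam = lam' := by
  have hdec : ∀ x : Fin 2 → PowerSeries ℂ, x = x 0 • e₁ + x 1 • e₂ := by
    intro x; subst he₁ he₂; funext i; fin_cases i <;> simp
  set X : PowerSeries ℂ := PowerSeries.X with hX
  have hXne : X ≠ 0 := PowerSeries.X_ne_zero
  constructor
  · rintro ⟨f, hf1, hf2⟩
    -- components of the images of basis vectors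
    set p := f e₁ 0 with hp
    set q := f e₁ 1 with hq
    set r := f e₂ 0 with hr
    set s := f e₂ 1 with hs
    obtain ⟨m, hm⟩ := hf1 e₁
    obtain ⟨m', hm'⟩ := hf1 e₂
    have hpval : p = 1 + X * m 0 := by
      have := congrFun hm 0
      subst he₁
      simp [Pi.sub_apply, Pi.smul_apply, smul_eq_mul] at this
      linear_combination this
    have hsval : s = 1 + X * m' 1 := by
      have := congrFun hm' 1
      subst he₂
      simp [Pi.sub_apply, Pi.smul_apply, smul_eq_mul] at this
      linear_combination this
    have hpne : p ≠ 0 := by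
      intro h0
      have : PowerSeries.constantCoeff p = 1 := by
        rw [hpval]; simp [hX]
      rw [h0] at this; simp at this
    have hsne : s ≠ 0 := by
      intro h0
      have : PowerSeries.constantCoeff s = 1 := by
        rw [hsval]; simp [hX]
      rw [h0] at this; simp at this
    -- expansion of mul'
    have hexp : ∀ x y : Fin 2 → PowerSeries ℂ,
        mul' x y = (lam' * (x 0 * y 0)) • e₁ +
          ((lam' + X) * (x 0 * y 1) + lam' * (x 1 * y 0)) • e₂ := by
      intro x y
      conv_lhs => rw [hdec x, hdec y]
      simp only [map_add, map_smul, LinearMap.add_apply, LinearMap.smul_apply,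
        h11', h12', h21', h22', smul_smul, smul_zero, add_zero]
      simp only [smul_add, smul_smul]
      rw [add_assoc, ← add_smul]
      congr 2 <;> ring
    have hcomp0 : ∀ x y : Fin 2 → PowerSeries ℂ,
        mul' x y 0 = lam' * (x 0 * y 0) := by
      intro x y; rw [hexp]; subst he₁ he₂; simp
    have hcomp1 : ∀ x y : Fin 2 → PowerSeries ℂ,
        mul' x y 1 = (lam' + X) * (x 0 * y 1) + lam' * (x 1 * y 0) := by
      intro x y; rw [hexp]; subst he₁ he₂; simp
    -- equation B from e₁ e₁, component 0
    have EB : lam * p = lam' * (p * p) := by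
      have h := hf2 e₁ e₁
      rw [h11, map_smul] at h
      have := congrFun h 0
      rw [hcomp0] at this
      simpa [Pi.smul_apply, smul_eq_mul] using this
    -- equation A from e₁ e₂, component 0
    have EA : (lam + X) * r = lam' * (p * r) := by
      have h := hf2 e₁ e₂
      rw [h12, map_smul] at h
      have := congrFun h 0
      rw [hcomp0] at this
      simpa [Pi.smul_apply, smul_eq_mul] using this
    -- equation C from e₁ e₂, component 1
    have EC : (lam + X) * s = (lam' + X) * (p * s) + lam' * (q * r) := by
      have h := hf2 e₁ e₂
      rw [h12, map_smul] at h
      have := congrFun h 1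
      rw [hcomp1] at this
      simpa [Pi.smul_apply, smul_eq_mul] using this
    -- lam = lam' * p
    have hlam : lam = lam' * p := by
      have : p * lam = p * (lam' * p) := by ring_nf; linear_combination EB
      exact mul_left_cancel₀ hpne this
    -- r = 0
    have hr0 : r = 0 := by
      have hXr : X * r = 0 := by linear_combination EA - r * hlam
      exact (mul_eq_zero.mp hXr).resolve_left hXne
    rw [hr0] at EC
    have hXs : X * (s * (1 - p)) = 0 := by linear_combination EC - s * hlam
    have hsp : s * (1 - p) = 0 := (mul_eq_zero.mp hXs).resolve_left hXne
    have hp1 : p = 1 := by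
      have := (mul_eq_zero.mp hsp).resolve_left hsne
      linear_combination -this
    rw [hlam, hp1, mul_one]
  · rintro rfl
    have hmm : mul = mul' := by
      refine LinearMap.ext fun x => LinearMap.ext fun y => ?_
      conv_lhs => rw [hdec x, hdec y]
      conv_rhs => rw [hdec x, hdec y]
      simp only [map_add, map_smul, LinearMap.add_apply, LinearMap.smul_apply,
        h11, h12, h21, h22, h11', h12', h21', h22']
    exact ⟨LinearEquiv.refl _ _, fun x => ⟨0, by simp⟩, fun x y => by simp [hmm]⟩
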